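/- (Regular equilateral triangles.) Let k ≥ 1, let C be a color map on T_k, let c ∈ {0,1}, and let R be the set of edges of T_k with both endpoints in a sub-triangle {(r,s) : r ≥ r₀, s ≥ s₀, r + s ≤ r₀ + s₀ + t} of side t ≥ 1 contained in T_k. If all edges lying on two of the three sides of this sub-triangle have color c, then every edge in R has color c. -/
import Mathlib


noncomputable section

/-- The four possible colors of a puzzle edge: `0`, `1`, `3` and `m`. -/
inductive PColor
  | c0 | c1 | c3 | cm
deriving DecidableEq

/-- The step of an edge of type `ℓ`: type `0` goes to `x+(−1,0)`, type `1` to `x+(1,−1)`,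
type `2` to `x+(0,1)`. -/
def edgeStep : Fin 3 → ℤ × ℤ
  | 0 => (-1, 0)
  | 1 => (1, -1)
  | 2 => (0, 1)

/-- A triple of colors, read clockwise around a triangular face, is admissible if it is a
cyclic rotation of `(0,0,0)`, `(1,1,1)`, `(1,0,3)` or `(0,1,m)`. -/
def okTriple (a b c : PColor) : Prop :=
  (a = .c0 ∧ b = .c0 ∧ c = .c0) ∨ (a = .c1 ∧ b = .c1 ∧ c = .c1) ∨
  (a = .c1 ∧ b = .c0 ∧ c = .c3) ∨ (a = .c0 ∧ b = .c3 ∧ c = .c1) ∨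
  (a = .c3 ∧ b = .c1 ∧ c = .c0) ∨
  (a = .c0 ∧ b = .c1 ∧ c = .cm) ∨ (a = .c1 ∧ b = .cm ∧ c = .c0) ∨
  (a = .cm ∧ b = .c0 ∧ c = .c1)

/-- A color map on the triangular grid `T_k` : a coloring of the edges (encoded by their
type `ℓ ∈ {0,1,2}` and their origin) such that around every direct face
`{x, x+(1,0), x+(0,1)}` and every reversed face `{x, x+(1,0), x+(1,−1)}` of `T_k`, the
clockwise sequence of the three edge colors is admissible. -/
def IsColorMap (k : ℕ) (C : Fin 3 → ℤ × ℤ → PColor) : Prop :=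
  (∀ x : ℤ × ℤ, 0 ≤ x.1 → 0 ≤ x.2 → x.1 + x.2 + 1 ≤ (k : ℤ) →
    okTriple (C 2 x) (C 1 (x + (0, 1))) (C 0 (x + (1, 0)))) ∧
  (∀ x : ℤ × ℤ, 0 ≤ x.1 → 1 ≤ x.2 → x.1 + x.2 + 1 ≤ (k : ℤ) →
    okTriple (C 0 (x + (1, 0))) (C 2 (x + (1, -1))) (C 1 x))

/-- Membership in the equilateral sub-triangle with corner `(r₀, s₀)` and side `t`. -/
def inTri (r0 s0 : ℤ) (t : ℕ) (v : ℤ × ℤ) : Prop :=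
  r0 ≤ v.1 ∧ s0 ≤ v.2 ∧ v.1 + v.2 ≤ r0 + s0 + t

/-! ### Auxiliary material for the proof -/

namespace Statement13Aux

instance : Fintype PColor :=
  ⟨⟨{.c0, .c1, .c3, .cm}, by decide⟩, fun x => by cases x <;> decide⟩

instance (a b c : PColor) : Decidable (okTriple a b c) := by
  unfold okTriple; infer_instance

/-- The "mixed" color associated to a pure color. -/
def mixc : PColor → PColor
  | .c0 => .c3
  | .c1 => .cm
  | x => x

/-- The other pure color. -/
def dualc : PColor → PColor
  | .c0 => .c1
  | .c1 => .c0
  | x => x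

section Micro

variable {cb : PColor}

lemma mA (hcb : cb = .c0 ∨ cb = .c1) {a : PColor} (h : okTriple a cb cb) : a = cb := by
  rcases hcb with rfl | rfl <;> revert h <;> revert a <;> decide

lemma mB (hcb : cb = .c0 ∨ cb = .c1) {x : PColor} (h : okTriple cb cb x) : x = cb := by
  rcases hcb with rfl | rfl <;> revert h <;> revert x <;> decide

lemma mC (hcb : cb = .c0 ∨ cb = .c1) {y : PColor} (h : okTriple cb y cb) : y = cb := by
  rcases hcb with rfl | rfl <;> revert h <;> revert y <;> decide

lemma neDual (hcb : cb = .c0 ∨ cb = .c1) : dualc cb ≠ cb := by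
  rcases hcb with rfl | rfl <;> decide

lemma bhP (hcb : cb = .c0 ∨ cb = .c1) {a y' x y : PColor} (h1 : okTriple a y' x) (h2 : okTriple x cb y)
    (h3 : y' = cb ∨ y' = mixc cb) : y = cb ∨ y = mixc cb := by
  rcases hcb with rfl | rfl <;> revert h1 h2 h3 <;> revert a y' x y <;> decide

lemma bhD (hcb : cb = .c0 ∨ cb = .c1) {a y' x y : PColor} (h1 : okTriple a y' x) (h2 : okTriple x cb y)
    (h3 : y' = mixc cb) : y = mixc cb := by
  rcases hcb with rfl | rfl <;> revert h1 h2 h3 <;> revert a y' x y <;> decide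

lemma bhK (hcb : cb = .c0 ∨ cb = .c1) {a y : PColor} (h : okTriple a y cb) : y ≠ mixc cb := by
  rcases hcb with rfl | rfl <;> revert h <;> revert a y <;> decide

lemma lhP (hcb : cb = .c0 ∨ cb = .c1) {a y x a' : PColor} (h1 : okTriple a y x) (h2 : okTriple cb a' y)
    (h3 : a = cb ∨ a = mixc cb) : a' = cb ∨ a' = mixc cb := by
  rcases hcb with rfl | rfl <;> revert h1 h2 h3 <;> revert a y x a' <;> decide

lemma lhD (hcb : cb = .c0 ∨ cb = .c1) {a y x a' : PColor} (h1 : okTriple a y x) (h2 : okTriple cb a' y)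
    (h3 : a = mixc cb) : a' = mixc cb := by
  rcases hcb with rfl | rfl <;> revert h1 h2 h3 <;> revert a y x a' <;> decide

lemma lhK (hcb : cb = .c0 ∨ cb = .c1) {a x : PColor} (h : okTriple a cb x) : a ≠ mixc cb := by
  rcases hcb with rfl | rfl <;> revert h <;> revert a x <;> decide

lemma blRange (hcb : cb = .c0 ∨ cb = .c1) {b a : PColor} (h : okTriple b a cb) : a ≠ mixc cb := by
  rcases hcb with rfl | rfl <;> revert h <;> revert b a <;> decide

lemma blBase (hcb : cb = .c0 ∨ cb = .c1) {a y : PColor} (h : okTriple a y cb) : a ≠ mixc (dualc cb) := by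
  rcases hcb with rfl | rfl <;> revert h <;> revert a y <;> decide

lemma blDesc (hcb : cb = .c0 ∨ cb = .c1) {a y b a' : PColor} (h1 : okTriple a y b) (h2 : okTriple b a' cb)
    (h3 : a = mixc (dualc cb)) : a' = mixc (dualc cb) := by
  rcases hcb with rfl | rfl <;> revert h1 h2 h3 <;> revert a y b a' <;> decide

lemma blAsc (hcb : cb = .c0 ∨ cb = .c1) {b a a' y : PColor} (h1 : okTriple b a cb) (h2 : okTriple a' y b)
    (h3 : a = dualc cb) : a' = dualc cb := by
  rcases hcb with rfl | rfl <;> revert h1 h2 h3 <;> revert b a a' y <;> decide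

lemma blFin (hcb : cb = .c0 ∨ cb = .c1) {a : PColor} (h1 : a ≠ mixc cb) (h2 : a ≠ mixc (dualc cb))
    (h3 : a ≠ dualc cb) : a = cb := by
  rcases hcb with rfl | rfl <;> revert h1 h2 h3 <;> revert a <;> decide

end Micro

section Faces

variable {k : ℕ} {C : Fin 3 → ℤ × ℤ → PColor}

/-- Direct face, in explicit coordinates. -/
lemma fdir (hC : IsColorMap k C) (p q : ℤ) (h1 : 0 ≤ p) (h2 : 0 ≤ q) (h3 : p + q + 1 ≤ (k : ℤ)) :
    okTriple (C 2 (p, q)) (C 1 (p, q + 1)) (C 0 (p + 1, q)) := by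
  have h := hC.1 (p, q) h1 h2 h3
  have e1 : ((p, q) + ((0 : ℤ), (1 : ℤ)) : ℤ × ℤ) = (p, q + 1) := by
    simp [Prod.ext_iff]
  have e2 : ((p, q) + ((1 : ℤ), (0 : ℤ)) : ℤ × ℤ) = (p + 1, q) := by
    simp [Prod.ext_iff]
  rwa [e1, e2] at h

/-- Reversed face, in explicit coordinates. -/
lemma frev (hC : IsColorMap k C) (p q : ℤ) (h1 : 0 ≤ p) (h2 : 1 ≤ q) (h3 : p + q + 1 ≤ (k : ℤ)) :
    okTriple (C 0 (p + 1, q)) (C 2 (p + 1, q - 1)) (C 1 (p, q)) := by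
  have h := hC.2 (p, q) h1 h2 h3
  have e1 : ((p, q) + ((1 : ℤ), (0 : ℤ)) : ℤ × ℤ) = (p + 1, q) := by
    simp [Prod.ext_iff]
  have e2 : ((p, q) + ((1 : ℤ), (-1 : ℤ)) : ℤ × ℤ) = (p + 1, q - 1) := by
    simp [Prod.ext_iff, sub_eq_add_neg]
  rwa [e1, e2] at h

end Faces

section Edges

variable {C : Fin 3 → ℤ × ℤ → PColor} {cb : PColor}

/-- Extract the three families of colored edges from an "all edges colored" statement. -/
lemma edges0 {R S : ℤ} {T : ℕ}
    (hAll : ∀ ℓ : Fin 3, ∀ y : ℤ × ℤ, inTri R S T y → inTri R S T (y + edgeStep ℓ) →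
      C ℓ y = cb)
    (a b : ℤ) (h1 : R + 1 ≤ a) (h2 : S ≤ b) (h3 : a + b ≤ R + S + T) :
    C 0 (a, b) = cb :=
  hAll 0 (a, b)
    ⟨show R ≤ a by omega, show S ≤ b by omega, show a + b ≤ R + S + T by omega⟩
    ⟨show R ≤ a + -1 by omega, show S ≤ b + 0 by omega,
      show a + -1 + (b + 0) ≤ R + S + T by omega⟩

lemma edges1 {R S : ℤ} {T : ℕ}
    (hAll : ∀ ℓ : Fin 3, ∀ y : ℤ × ℤ, inTri R S T y → inTri R S T (y + edgeStep ℓ) →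
      C ℓ y = cb)
    (a b : ℤ) (h1 : R ≤ a) (h2 : S + 1 ≤ b) (h3 : a + b ≤ R + S + T) :
    C 1 (a, b) = cb :=
  hAll 1 (a, b)
    ⟨show R ≤ a by omega, show S ≤ b by omega, show a + b ≤ R + S + T by omega⟩
    ⟨show R ≤ a + 1 by omega, show S ≤ b + -1 by omega,
      show a + 1 + (b + -1) ≤ R + S + T by omega⟩

lemma edges2 {R S : ℤ} {T : ℕ}
    (hAll : ∀ ℓ : Fin 3, ∀ y : ℤ × ℤ, inTri R S T y → inTri R S T (y + edgeStep ℓ) →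
      C ℓ y = cb)
    (a b : ℤ) (h1 : R ≤ a) (h2 : S ≤ b) (h3 : a + b + 1 ≤ R + S + T) :
    C 2 (a, b) = cb :=
  hAll 2 (a, b)
    ⟨show R ≤ a by omega, show S ≤ b by omega, show a + b ≤ R + S + T by omega⟩
    ⟨show R ≤ a + 0 by omega, show S ≤ b + 1 by omega,
      show a + 0 + (b + 1) ≤ R + S + T by omega⟩

end Edges

end Statement13Aux

open Statement13Aux

/-- **Case bottom + hypotenuse.** -/
lemma caseBH (k : ℕ) (C : Fin 3 → ℤ × ℤ → PColor) (hC : IsColorMap k C)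
    (cb : PColor) (hcb : cb = .c0 ∨ cb = .c1) :
    ∀ t : ℕ, ∀ r0 s0 : ℤ, 0 ≤ r0 → 0 ≤ s0 → r0 + s0 + t ≤ (k : ℤ) →
    (∀ p : ℤ, r0 + 1 ≤ p → p + s0 ≤ r0 + s0 + t → C 0 (p, s0) = cb) →
    (∀ p q : ℤ, p + q = r0 + s0 + t → r0 ≤ p → s0 + 1 ≤ q → C 1 (p, q) = cb) →
    ∀ ℓ : Fin 3, ∀ y : ℤ × ℤ, inTri r0 s0 t y → inTri r0 s0 t (y + edgeStep ℓ) →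
      C ℓ y = cb := by
  intro t
  induction t with
  | zero =>
    intro r0 s0 _ _ _ _ _ ℓ y h1 h2
    exfalso
    obtain ⟨y1, y2⟩ := y
    obtain ⟨a1, a2, a3⟩ := h1
    have a1' : r0 ≤ y1 := a1
    have a2' : s0 ≤ y2 := a2
    have a3' : y1 + y2 ≤ r0 + s0 + (0 : ℕ) := a3
    fin_cases ℓ
    · obtain ⟨b1, b2, b3⟩ := h2
      have : y1 + -1 + (y2 + 0) ≤ r0 + s0 + (0 : ℕ) := b3
      have : r0 ≤ y1 + -1 := b1
      omega
    · obtain ⟨b1, b2, b3⟩ := h2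
      have : s0 ≤ y2 + -1 := b2
      have : y1 + 1 + (y2 + -1) ≤ r0 + s0 + (0 : ℕ) := b3
      omega
    · obtain ⟨b1, b2, b3⟩ := h2
      have : y1 + 0 + (y2 + 1) ≤ r0 + s0 + (0 : ℕ) := b3
      omega
  | succ t IH =>
    intro r0 s0 hr0 hs0 hk hbot hhyp
    have hcast : ((t + 1 : ℕ) : ℤ) = (t : ℤ) + 1 := by push_cast; ring
    -- the smaller triangle with corner (r0+1, s0) and side t
    have hinner := IH (r0 + 1) s0 (by omega) hs0 (by omega)
      (fun p hp hps => hbot p (by omega) (by omega))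
      (fun p q hpq hp hq => hhyp p q (by omega) (by omega) hq)
    have hin2 : ∀ s : ℤ, s0 + 1 ≤ s → s ≤ s0 + t → C 2 (r0 + 1, s - 1) = cb := by
      intro s hs1 hs2
      exact edges2 hinner (r0 + 1) (s - 1) (by omega) (by omega) (by omega)
    -- anchor edges
    have hx0 : C 0 (r0 + 1, s0) = cb := hbot (r0 + 1) (by omega) (by omega)
    have hyTop : C 1 (r0, s0 + (t : ℤ) + 1) = cb :=
      hhyp r0 (s0 + t + 1) (by omega) (by omega) (by omega)
    -- the faces along the leftmost column
    have f3 : ∀ s : ℤ, s0 ≤ s → s ≤ s0 + t →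
        okTriple (C 2 (r0, s)) (C 1 (r0, s + 1)) (C 0 (r0 + 1, s)) := by
      intro s h1 h2
      exact fdir hC r0 s hr0 (by omega) (by omega)
    have f4 : ∀ s : ℤ, s0 + 1 ≤ s → s ≤ s0 + t →
        okTriple (C 0 (r0 + 1, s)) cb (C 1 (r0, s)) := by
      intro s h1 h2
      have h := frev hC r0 s hr0 (by omega) (by omega)
      rwa [hin2 s h1 h2] at h
    -- defect kills downward
    have claimD : ∀ s : ℤ, s0 + 1 ≤ s → s ≤ s0 + (t : ℤ) + 1 →
        C 1 (r0, s) = mixc cb → False := by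
      have key : ∀ s : ℤ, s0 + 1 ≤ s →
          (s ≤ s0 + (t : ℤ) + 1 → C 1 (r0, s) = mixc cb → False) := by
        refine Int.le_induction ?_ ?_
        · intro _ hm
          have h := f3 s0 (by omega) (by omega)
          rw [hx0] at h
          exact bhK hcb h hm
        · intro s hs ih hle hm
          have h1 := f3 s (by omega) (by omega)
          have h2 := f4 s (by omega) (by omega)
          exact ih (by omega) (bhD hcb h1 h2 hm)
      exact fun s h1 h2 h3 => key s h1 h2 h3
    -- all diagonal edges of the column are cb or the defect color
    have claimP : ∀ s : ℤ, s ≤ s0 + (t : ℤ) + 1 → s0 + 1 ≤ s →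
        (C 1 (r0, s) = cb ∨ C 1 (r0, s) = mixc cb) := by
      refine Int.le_induction_down ?_ ?_
      · intro _
        exact Or.inl hyTop
      · intro s hs ih hlow
        have hprev : C 1 (r0, s) = cb ∨ C 1 (r0, s) = mixc cb := ih (by omega)
        have h1 := f3 (s - 1) (by omega) (by omega)
        have h2 := f4 (s - 1) (by omega) (by omega)
        rw [show s - 1 + 1 = s by ring] at h1
        exact bhP hcb h1 h2 hprev
    have Yall : ∀ s : ℤ, s0 + 1 ≤ s → s ≤ s0 + (t : ℤ) + 1 → C 1 (r0, s) = cb := by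
      intro s h1 h2
      rcases claimP s h2 h1 with h | h
      · exact h
      · exact absurd h (fun hh => claimD s h1 h2 hh)
    have Xall : ∀ s : ℤ, s0 ≤ s → s ≤ s0 + t → C 0 (r0 + 1, s) = cb := by
      intro s h1 h2
      rcases eq_or_lt_of_le h1 with h | h
      · rw [← h]; exact hx0
      · have hf := f4 s (by omega) (by omega)
        rw [Yall s (by omega) (by omega)] at hf
        exact mA hcb hf
    have Aall : ∀ s : ℤ, s0 ≤ s → s ≤ s0 + t → C 2 (r0, s) = cb := by
      intro s h1 h2
      have hf := f3 s h1 h2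
      rw [Yall (s + 1) (by omega) (by omega), Xall s h1 h2] at hf
      exact mA hcb hf
    -- coverage
    intro ℓ y h1 h2
    obtain ⟨y1, y2⟩ := y
    obtain ⟨a1, a2, a3⟩ := h1
    have a1' : r0 ≤ y1 := a1
    have a2' : s0 ≤ y2 := a2
    have a3' : y1 + y2 ≤ r0 + s0 + ((t + 1 : ℕ) : ℤ) := a3
    fin_cases ℓ
    · -- type 0
      obtain ⟨b1, b2, b3⟩ := h2
      have b1' : r0 ≤ y1 + -1 := b1
      rcases eq_or_lt_of_le b1' with h | h
      · have hy1 : y1 = r0 + 1 := by omega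
        subst hy1
        exact Xall y2 (by omega) (by omega)
      · exact edges0 hinner y1 y2 (by omega) (by omega) (by omega)
    · -- type 1
      obtain ⟨b1, b2, b3⟩ := h2
      have b2' : s0 ≤ y2 + -1 := b2
      have b3' : y1 + 1 + (y2 + -1) ≤ r0 + s0 + ((t + 1 : ℕ) : ℤ) := b3
      rcases eq_or_lt_of_le a1' with h | h
      · rw [← h]
        exact Yall y2 (by omega) (by omega)
      · exact edges1 hinner y1 y2 (by omega) (by omega) (by omega)
    · -- type 2
      obtain ⟨b1, b2, b3⟩ := h2
      have b3' : y1 + 0 + (y2 + 1) ≤ r0 + s0 + ((t + 1 : ℕ) : ℤ) := b3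
      rcases eq_or_lt_of_le a1' with h | h
      · rw [← h]
        exact Aall y2 (by omega) (by omega)
      · exact edges2 hinner y1 y2 (by omega) (by omega) (by omega)


/-- **Case left + hypotenuse.** -/
lemma caseLH (k : ℕ) (C : Fin 3 → ℤ × ℤ → PColor) (hC : IsColorMap k C)
    (cb : PColor) (hcb : cb = .c0 ∨ cb = .c1) :
    ∀ t : ℕ, ∀ r0 s0 : ℤ, 0 ≤ r0 → 0 ≤ s0 → r0 + s0 + t ≤ (k : ℤ) →
    (∀ q : ℤ, s0 ≤ q → r0 + q + 1 ≤ r0 + s0 + t → C 2 (r0, q) = cb) →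
    (∀ p q : ℤ, p + q = r0 + s0 + t → r0 ≤ p → s0 + 1 ≤ q → C 1 (p, q) = cb) →
    ∀ ℓ : Fin 3, ∀ y : ℤ × ℤ, inTri r0 s0 t y → inTri r0 s0 t (y + edgeStep ℓ) →
      C ℓ y = cb := by
  intro t
  induction t with
  | zero =>
    intro r0 s0 _ _ _ _ _ ℓ y h1 h2
    exfalso
    obtain ⟨y1, y2⟩ := y
    obtain ⟨a1, a2, a3⟩ := h1
    have a1' : r0 ≤ y1 := a1
    have a2' : s0 ≤ y2 := a2
    have a3' : y1 + y2 ≤ r0 + s0 + (0 : ℕ) := a3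
    fin_cases ℓ
    · obtain ⟨b1, b2, b3⟩ := h2
      have : y1 + -1 + (y2 + 0) ≤ r0 + s0 + (0 : ℕ) := b3
      have : r0 ≤ y1 + -1 := b1
      omega
    · obtain ⟨b1, b2, b3⟩ := h2
      have : s0 ≤ y2 + -1 := b2
      have : y1 + 1 + (y2 + -1) ≤ r0 + s0 + (0 : ℕ) := b3
      omega
    · obtain ⟨b1, b2, b3⟩ := h2
      have : y1 + 0 + (y2 + 1) ≤ r0 + s0 + (0 : ℕ) := b3
      omega
  | succ t IH =>
    intro r0 s0 hr0 hs0 hk hleft hhyp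
    -- the smaller triangle with corner (r0, s0+1) and side t
    have hinner := IH r0 (s0 + 1) hr0 (by omega) (by omega)
      (fun q hq hq2 => hleft q (by omega) (by omega))
      (fun p q hpq hp hq => hhyp p q (by omega) hp (by omega))
    have hin0 : ∀ r : ℤ, r0 ≤ r → r + s0 + 2 ≤ r0 + s0 + (t : ℤ) + 1 →
        C 0 (r + 1, s0 + 1) = cb := by
      intro r h1 h2
      exact edges0 hinner (r + 1) (s0 + 1) (by omega) (by omega) (by omega)
    -- anchors
    have g1 : C 2 (r0, s0) = cb := hleft s0 (by omega) (by omega)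
    have g2 : C 1 (r0 + (t : ℤ), s0 + 1) = cb :=
      hhyp (r0 + t) (s0 + 1) (by omega) (by omega) (by omega)
    -- the faces along the bottom row
    have g3 : ∀ r : ℤ, r0 ≤ r → r ≤ r0 + t →
        okTriple (C 2 (r, s0)) (C 1 (r, s0 + 1)) (C 0 (r + 1, s0)) := by
      intro r h1 h2
      exact fdir hC r s0 (by omega) hs0 (by omega)
    have g4 : ∀ r : ℤ, r0 ≤ r → r + 1 ≤ r0 + t →
        okTriple cb (C 2 (r + 1, s0)) (C 1 (r, s0 + 1)) := by
      intro r h1 h2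
      have h := frev hC r (s0 + 1) (by omega) (by omega) (by omega)
      rw [show s0 + 1 - 1 = s0 by ring] at h
      rwa [hin0 r h1 (by omega)] at h
    -- the defect rides to the right, where it is killed by the hypotenuse
    have claimD : ∀ r : ℤ, r ≤ r0 + (t : ℤ) → r0 ≤ r →
        C 2 (r, s0) = mixc cb → False := by
      refine Int.le_induction_down ?_ ?_
      · intro _ hm
        have h := g3 (r0 + t) (by omega) (by omega)
        rw [g2] at h
        exact lhK hcb h hm
      · intro r hr ih hlow hm
        have h1 := g3 (r - 1) (by omega) (by omega)
        have h2 := g4 (r - 1) (by omega) (by omega)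
        rw [show r - 1 + 1 = r by ring] at h2
        exact ih (by omega) (lhD hcb h1 h2 hm)
    have claimP : ∀ r : ℤ, r0 ≤ r → r ≤ r0 + (t : ℤ) →
        (C 2 (r, s0) = cb ∨ C 2 (r, s0) = mixc cb) := by
      have key : ∀ r : ℤ, r0 ≤ r → (r ≤ r0 + (t : ℤ) →
          (C 2 (r, s0) = cb ∨ C 2 (r, s0) = mixc cb)) := by
        refine Int.le_induction ?_ ?_
        · intro _
          exact Or.inl g1
        · intro r hr ih hle
          have hprev := ih (by omega)
          have h1 := g3 r (by omega) (by omega)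
          have h2 := g4 r (by omega) (by omega)
          exact lhP hcb h1 h2 hprev
      exact fun r h1 h2 => key r h1 h2
    have Aall : ∀ r : ℤ, r0 ≤ r → r ≤ r0 + (t : ℤ) → C 2 (r, s0) = cb := by
      intro r h1 h2
      rcases claimP r h1 h2 with h | h
      · exact h
      · exact absurd h (fun hh => claimD r h2 h1 hh)
    have Yall : ∀ r : ℤ, r0 ≤ r → r ≤ r0 + (t : ℤ) → C 1 (r, s0 + 1) = cb := by
      intro r h1 h2
      rcases eq_or_lt_of_le h2 with h | h
      · rw [h]; exact g2
      · have hf := g4 r h1 (by omega)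
        rw [Aall (r + 1) (by omega) (by omega)] at hf
        exact mB hcb hf
    have Xall : ∀ p : ℤ, r0 + 1 ≤ p → p + s0 ≤ r0 + s0 + (t : ℤ) + 1 →
        C 0 (p, s0) = cb := by
      intro p h1 h2
      have hf := g3 (p - 1) (by omega) (by omega)
      rw [show p - 1 + 1 = p by ring] at hf
      rw [Aall (p - 1) (by omega) (by omega), Yall (p - 1) (by omega) (by omega)] at hf
      exact mB hcb hf
    -- coverage
    intro ℓ y h1 h2
    obtain ⟨y1, y2⟩ := y
    obtain ⟨a1, a2, a3⟩ := h1
    have a1' : r0 ≤ y1 := a1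
    have a2' : s0 ≤ y2 := a2
    have a3' : y1 + y2 ≤ r0 + s0 + ((t + 1 : ℕ) : ℤ) := a3
    fin_cases ℓ
    · -- type 0
      obtain ⟨b1, b2, b3⟩ := h2
      have b1' : r0 ≤ y1 + -1 := b1
      rcases eq_or_lt_of_le a2' with h | h
      · rw [← h]
        exact Xall y1 (by omega) (by omega)
      · exact edges0 hinner y1 y2 (by omega) (by omega) (by omega)
    · -- type 1
      obtain ⟨b1, b2, b3⟩ := h2
      have b2' : s0 ≤ y2 + -1 := b2
      have b3' : y1 + 1 + (y2 + -1) ≤ r0 + s0 + ((t + 1 : ℕ) : ℤ) := b3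
      rcases eq_or_lt_of_le (show s0 + 1 ≤ y2 by omega) with h | h
      · rw [← h]
        exact Yall y1 (by omega) (by omega)
      · exact edges1 hinner y1 y2 (by omega) (by omega) (by omega)
    · -- type 2
      obtain ⟨b1, b2, b3⟩ := h2
      have b3' : y1 + 0 + (y2 + 1) ≤ r0 + s0 + ((t + 1 : ℕ) : ℤ) := b3
      rcases eq_or_lt_of_le a2' with h | h
      · rw [← h]
        exact Aall y1 (by omega) (by omega)
      · exact edges2 hinner y1 y2 (by omega) (by omega) (by omega)

/-- **Case bottom + left.** -/
lemma caseBL (k : ℕ) (C : Fin 3 → ℤ × ℤ → PColor) (hC : IsColorMap k C)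
    (cb : PColor) (hcb : cb = .c0 ∨ cb = .c1) :
    ∀ t : ℕ, ∀ r0 s0 : ℤ, 0 ≤ r0 → 0 ≤ s0 → r0 + s0 + t ≤ (k : ℤ) →
    (∀ p : ℤ, r0 + 1 ≤ p → p + s0 ≤ r0 + s0 + t → C 0 (p, s0) = cb) →
    (∀ q : ℤ, s0 ≤ q → r0 + q + 1 ≤ r0 + s0 + t → C 2 (r0, q) = cb) →
    ∀ ℓ : Fin 3, ∀ y : ℤ × ℤ, inTri r0 s0 t y → inTri r0 s0 t (y + edgeStep ℓ) →
      C ℓ y = cb := by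
  intro t
  induction t with
  | zero =>
    intro r0 s0 _ _ _ _ _ ℓ y h1 h2
    exfalso
    obtain ⟨y1, y2⟩ := y
    obtain ⟨a1, a2, a3⟩ := h1
    have a1' : r0 ≤ y1 := a1
    have a2' : s0 ≤ y2 := a2
    have a3' : y1 + y2 ≤ r0 + s0 + (0 : ℕ) := a3
    fin_cases ℓ
    · obtain ⟨b1, b2, b3⟩ := h2
      have : y1 + -1 + (y2 + 0) ≤ r0 + s0 + (0 : ℕ) := b3
      have : r0 ≤ y1 + -1 := b1
      omega
    · obtain ⟨b1, b2, b3⟩ := h2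
      have : s0 ≤ y2 + -1 := b2
      have : y1 + 1 + (y2 + -1) ≤ r0 + s0 + (0 : ℕ) := b3
      omega
    · obtain ⟨b1, b2, b3⟩ := h2
      have : y1 + 0 + (y2 + 1) ≤ r0 + s0 + (0 : ℕ) := b3
      omega
  | succ t IH =>
    intro r0 s0 hr0 hs0 hk hbot hleft
    set L : ℤ := r0 + s0 + (t : ℤ) + 1 with hLdef
    -- the smaller triangle with the same corner and side t
    have hinner := IH r0 s0 hr0 hs0 (by omega)
      (fun p hp hps => hbot p hp (by omega))
      (fun q hq hq2 => hleft q hq (by omega))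
    have hin1 : ∀ s : ℤ, s0 + 1 ≤ s → s ≤ s0 + t → C 1 (L - 1 - s, s) = cb := by
      intro s h1 h2
      exact edges1 hinner (L - 1 - s) s (by omega) (by omega) (by omega)
    -- anchors
    have h1b : C 0 (L - s0, s0) = cb := by
      have := hbot (r0 + (t : ℤ) + 1) (by omega) (by omega)
      rwa [show L - s0 = r0 + (t : ℤ) + 1 by omega]
    have h2l : C 2 (L - 1 - (s0 + (t : ℤ)), s0 + (t : ℤ)) = cb := by
      have := hleft (s0 + t) (by omega) (by omega)
      rwa [show L - 1 - (s0 + (t : ℤ)) = r0 by omega]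
    -- faces along the hypotenuse strip
    have h3 : ∀ s : ℤ, s0 ≤ s → s ≤ s0 + t →
        okTriple (C 2 (L - 1 - s, s)) (C 1 (L - 1 - s, s + 1)) (C 0 (L - s, s)) := by
      intro s hs1 hs2
      have h := fdir hC (L - 1 - s) s (by omega) (by omega) (by omega)
      rwa [show L - 1 - s + 1 = L - s by ring] at h
    have h4 : ∀ s : ℤ, s0 + 1 ≤ s → s ≤ s0 + t →
        okTriple (C 0 (L - s, s)) (C 2 (L - s, s - 1)) cb := by
      intro s hs1 hs2
      have h := frev hC (L - 1 - s) s (by omega) (by omega) (by omega)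
      rw [show L - 1 - s + 1 = L - s by ring] at h
      rwa [hin1 s hs1 hs2] at h
    -- A-edges avoid `mixc cb`
    have notMix : ∀ s : ℤ, s0 ≤ s → s + 1 ≤ s0 + t → C 2 (L - 1 - s, s) ≠ mixc cb := by
      intro s hs1 hs2
      have h := h4 (s + 1) (by omega) (by omega)
      rw [show (L - (s + 1) : ℤ) = L - 1 - s by ring, show (s + 1 - 1 : ℤ) = s by ring] at h
      exact blRange hcb h
    -- A-edges avoid `mixc (dualc cb)` : that defect would descend to the bottom corner
    have notMu : ∀ s : ℤ, s0 ≤ s → s ≤ s0 + (t : ℤ) →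
        C 2 (L - 1 - s, s) ≠ mixc (dualc cb) := by
      have key : ∀ s : ℤ, s0 ≤ s → (s ≤ s0 + (t : ℤ) →
          C 2 (L - 1 - s, s) ≠ mixc (dualc cb)) := by
        refine Int.le_induction ?_ ?_
        · intro _
          have h := h3 s0 (by omega) (by omega)
          rw [h1b] at h
          exact blBase hcb h
        · intro s hs ih hle hm
          have hd := h4 (s + 1) (by omega) (by omega)
          rw [show (L - (s + 1) : ℤ) = L - 1 - s by ring,
            show (s + 1 - 1 : ℤ) = s by ring] at hd
          have h3' := h3 (s + 1) (by omega) (by omega)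
          rw [show (L - (s + 1) : ℤ) = L - 1 - s by ring] at h3'
          exact ih (by omega) (blDesc hcb h3' hd hm)
      exact fun s a b c => key s a b c
    -- A-edges avoid `dualc cb` : that defect would ascend to the top-left corner
    have notNu : ∀ s : ℤ, s ≤ s0 + (t : ℤ) → s0 ≤ s →
        C 2 (L - 1 - s, s) ≠ dualc cb := by
      refine Int.le_induction_down ?_ ?_
      · intro _ hm
        rw [h2l] at hm
        exact neDual hcb hm.symm
      · intro s hs ih hlow hm
        have hd := h4 s (by omega) (by omega)
        have h3' := h3 s (by omega) (by omega)
        rw [show (L - 1 - (s - 1) : ℤ) = L - s by ring] at hm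
        have : C 2 (L - 1 - s, s) = dualc cb := blAsc hcb hd h3' hm
        exact ih (by omega) this
    have Aall : ∀ s : ℤ, s0 ≤ s → s ≤ s0 + (t : ℤ) → C 2 (L - 1 - s, s) = cb := by
      intro s hs1 hs2
      rcases eq_or_lt_of_le hs2 with h | h
      · rw [h]; exact h2l
      · exact blFin hcb (notMix s hs1 (by omega)) (notMu s hs1 hs2) (notNu s hs2 hs1)
    have Ball : ∀ s : ℤ, s0 ≤ s → s ≤ s0 + (t : ℤ) → C 0 (L - s, s) = cb := by
      intro s hs1 hs2
      rcases eq_or_lt_of_le hs1 with h | h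
      · rw [← h]; exact h1b
      · have hf := h4 s (by omega) hs2
        have hA := Aall (s - 1) (by omega) (by omega)
        rw [show (L - 1 - (s - 1) : ℤ) = L - s by ring] at hA
        rw [hA] at hf
        exact mA hcb hf
    have Yall : ∀ s : ℤ, s0 ≤ s → s ≤ s0 + (t : ℤ) → C 1 (L - 1 - s, s + 1) = cb := by
      intro s hs1 hs2
      have hf := h3 s hs1 hs2
      rw [Aall s hs1 hs2, Ball s hs1 hs2] at hf
      exact mC hcb hf
    -- coverage
    intro ℓ y h1 h2
    obtain ⟨y1, y2⟩ := y
    obtain ⟨a1, a2, a3⟩ := h1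
    have a1' : r0 ≤ y1 := a1
    have a2' : s0 ≤ y2 := a2
    have a3' : y1 + y2 ≤ r0 + s0 + ((t + 1 : ℕ) : ℤ) := a3
    fin_cases ℓ
    · -- type 0
      obtain ⟨b1, b2, b3⟩ := h2
      have b1' : r0 ≤ y1 + -1 := b1
      rcases eq_or_lt_of_le (show y1 + y2 ≤ L by omega) with h | h
      · have := Ball y2 a2' (by omega)
        rwa [show L - y2 = y1 by omega] at this
      · exact edges0 hinner y1 y2 (by omega) (by omega) (by omega)
    · -- type 1
      obtain ⟨b1, b2, b3⟩ := h2
      have b2' : s0 ≤ y2 + -1 := b2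
      have b3' : y1 + 1 + (y2 + -1) ≤ r0 + s0 + ((t + 1 : ℕ) : ℤ) := b3
      rcases eq_or_lt_of_le (show y1 + y2 ≤ L by omega) with h | h
      · have := Yall (y2 - 1) (by omega) (by omega)
        rw [show L - 1 - (y2 - 1) = y1 by omega, show y2 - 1 + 1 = y2 by ring] at this
        exact this
      · exact edges1 hinner y1 y2 (by omega) (by omega) (by omega)
    · -- type 2
      obtain ⟨b1, b2, b3⟩ := h2
      have b3' : y1 + 0 + (y2 + 1) ≤ r0 + s0 + ((t + 1 : ℕ) : ℤ) := b3
      rcases eq_or_lt_of_le (show y1 + y2 + 1 ≤ L by omega) with h | h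
      · have := Aall y2 a2' (by omega)
        rwa [show L - 1 - y2 = y1 by omega] at this
      · exact edges2 hinner y1 y2 (by omega) (by omega) (by omega)

/-- **Regular equilateral triangles.**
If two of the three sides of a sub-triangle of side `t ≥ 1` of `T_k` have all their edges
colored `c ∈ {0,1}`, then every edge with both endpoints in the sub-triangle is colored
`c`. -/
theorem statement13 (k : ℕ) (C : Fin 3 → ℤ × ℤ → PColor) (hC : IsColorMap k C)
    (cb : PColor) (hcb : cb = .c0 ∨ cb = .c1)
    (r0 s0 : ℤ) (t : ℕ) (ht : 1 ≤ t) (hr0 : 0 ≤ r0) (hs0 : 0 ≤ s0)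
    (hsub : r0 + s0 + t ≤ (k : ℤ))
    (hsides :
      ((∀ y : ℤ × ℤ, y.2 = s0 → inTri r0 s0 t y → inTri r0 s0 t (y + edgeStep 0) →
          C 0 y = cb) ∧
        (∀ y : ℤ × ℤ, y.1 = r0 → inTri r0 s0 t y → inTri r0 s0 t (y + edgeStep 2) →
          C 2 y = cb)) ∨
      ((∀ y : ℤ × ℤ, y.2 = s0 → inTri r0 s0 t y → inTri r0 s0 t (y + edgeStep 0) →
          C 0 y = cb) ∧
        (∀ y : ℤ × ℤ, y.1 + y.2 = r0 + s0 + t → inTri r0 s0 t y →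
          inTri r0 s0 t (y + edgeStep 1) → C 1 y = cb)) ∨
      ((∀ y : ℤ × ℤ, y.1 = r0 → inTri r0 s0 t y → inTri r0 s0 t (y + edgeStep 2) →
          C 2 y = cb) ∧
        (∀ y : ℤ × ℤ, y.1 + y.2 = r0 + s0 + t → inTri r0 s0 t y →
          inTri r0 s0 t (y + edgeStep 1) → C 1 y = cb))) :
    ∀ ℓ : Fin 3, ∀ y : ℤ × ℤ, inTri r0 s0 t y → inTri r0 s0 t (y + edgeStep ℓ) →
      C ℓ y = cb := by
  have hbot' : (∀ y : ℤ × ℤ, y.2 = s0 → inTri r0 s0 t y → inTri r0 s0 t (y + edgeStep 0) →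
      C 0 y = cb) →
      ∀ p : ℤ, r0 + 1 ≤ p → p + s0 ≤ r0 + s0 + t → C 0 (p, s0) = cb := by
    intro hb p h1 h2
    exact hb (p, s0) rfl
      ⟨show r0 ≤ p by omega, show s0 ≤ s0 by omega, show p + s0 ≤ r0 + s0 + t by omega⟩
      ⟨show r0 ≤ p + -1 by omega, show s0 ≤ s0 + 0 by omega,
        show p + -1 + (s0 + 0) ≤ r0 + s0 + t by omega⟩
  have hleft' : (∀ y : ℤ × ℤ, y.1 = r0 → inTri r0 s0 t y → inTri r0 s0 t (y + edgeStep 2) →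
      C 2 y = cb) →
      ∀ q : ℤ, s0 ≤ q → r0 + q + 1 ≤ r0 + s0 + t → C 2 (r0, q) = cb := by
    intro hl q h1 h2
    exact hl (r0, q) rfl
      ⟨show r0 ≤ r0 by omega, show s0 ≤ q by omega, show r0 + q ≤ r0 + s0 + t by omega⟩
      ⟨show r0 ≤ r0 + 0 by omega, show s0 ≤ q + 1 by omega,
        show r0 + 0 + (q + 1) ≤ r0 + s0 + t by omega⟩
  have hhyp' : (∀ y : ℤ × ℤ, y.1 + y.2 = r0 + s0 + t → inTri r0 s0 t y →
      inTri r0 s0 t (y + edgeStep 1) → C 1 y = cb) →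
      ∀ p q : ℤ, p + q = r0 + s0 + t → r0 ≤ p → s0 + 1 ≤ q → C 1 (p, q) = cb := by
    intro hh p q h1 h2 h3
    exact hh (p, q) h1
      ⟨show r0 ≤ p by omega, show s0 ≤ q by omega, show p + q ≤ r0 + s0 + t by omega⟩
      ⟨show r0 ≤ p + 1 by omega, show s0 ≤ q + -1 by omega,
        show p + 1 + (q + -1) ≤ r0 + s0 + t by omega⟩
  rcases hsides with ⟨hb, hl⟩ | ⟨hb, hh⟩ | ⟨hl, hh⟩
  · exact caseBL k C hC cb hcb t r0 s0 hr0 hs0 hsub (hbot' hb) (hleft' hl)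
  · exact caseBH k C hC cb hcb t r0 s0 hr0 hs0 hsub (hbot' hb) (hhyp' hh)
  · exact caseLH k C hC cb hcb t r0 s0 hr0 hs0 hsub (hleft' hl) (hhyp' hh)
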